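/- Let M_q(z) be the ordinary generating function of Motzkin trees with exactly q unary nodes, counted by total number of nodes. Then M_0(z) = (1 - sqrt(1-4z^2))/(2z), and for q ≥ 1, M_q(z) = (z·M_{q-1}(z) + z·∑_{ℓ=1}^{q-1} M_ℓ(z)·M_{q-ℓ}(z)) / (1 - 2z·M_0(z)). -/

import Mathlib

open PowerSeries

inductive MotzkinTree : Type
  | leaf : MotzkinTree
  | unary : MotzkinTree → MotzkinTree
  | binary : MotzkinTree → MotzkinTree → MotzkinTree

namespace MotzkinTree

def size : MotzkinTree → ℕ
  | leaf => 1
  | unary t => 1 + t.size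
  | binary l r => 1 + l.size + r.size

def unaries : MotzkinTree → ℕ
  | leaf => 0
  | unary t => 1 + t.unaries
  | binary l r => l.unaries + r.unaries

end MotzkinTree

/-- `M q` : ordinary generating function of Motzkin trees with exactly `q` unary
nodes, counted by total number of nodes. -/
noncomputable def motzkinGF (q : ℕ) : PowerSeries ℚ :=
  PowerSeries.mk fun n =>
    (Nat.card {t : MotzkinTree // t.size = n ∧ t.unaries = q} : ℚ)

deriving instance DecidableEq for MotzkinTree

namespace MotzkinTree

lemma one_le_size (t : MotzkinTree) : 1 ≤ t.size := by
  cases t <;> simp [size] <;> omega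

/-- A finset containing all trees of size ≤ n. -/
def allT : ℕ → Finset MotzkinTree
  | 0 => ∅
  | n+1 => insert MotzkinTree.leaf (((allT n).image MotzkinTree.unary) ∪
      (((allT n) ×ˢ (allT n)).image fun p => MotzkinTree.binary p.1 p.2))

lemma mem_allT : ∀ (t : MotzkinTree) (n : ℕ), t.size ≤ n → t ∈ allT n := by
  intro t
  induction t with
  | leaf =>
    rintro (_ | n) hn
    · simp [size] at hn
    · simp [allT]
  | unary t ih =>
    rintro (_ | n) hn
    · exact absurd (le_trans (one_le_size _) hn) (by omega)
    · simp only [allT, Finset.mem_insert, Finset.mem_union, Finset.mem_image]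
      exact Or.inr (Or.inl ⟨t, ih n (by simp [size] at hn; omega), rfl⟩)
  | binary l r ihl ihr =>
    rintro (_ | n) hn
    · exact absurd (le_trans (one_le_size _) hn) (by omega)
    · simp only [allT, Finset.mem_insert, Finset.mem_union, Finset.mem_image]
      refine Or.inr (Or.inr ⟨(l, r), ?_, rfl⟩)
      simp only [size] at hn
      have h1 := one_le_size l
      have h2 := one_le_size r
      exact Finset.mem_product.2 ⟨ihl n (by omega), ihr n (by omega)⟩

/-- Trees of size exactly n. -/
def tset (n : ℕ) : Finset MotzkinTree := (allT n).filter fun t => t.size = n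

lemma mem_tset {t : MotzkinTree} {n : ℕ} : t ∈ tset n ↔ t.size = n := by
  constructor
  · intro h; exact (Finset.mem_filter.1 h).2
  · intro h; exact Finset.mem_filter.2 ⟨mem_allT t n h.le, h⟩

def cnt (q n : ℕ) : ℕ := ((tset n).filter fun t => t.unaries = q).card

lemma cnt_zero (q : ℕ) : cnt q 0 = 0 := by
  have : tset 0 = ∅ := by
    ext t; simp only [mem_tset, Finset.notMem_empty, iff_false]
    have := one_le_size t; omega
  simp [cnt, this]

lemma unary_inj : Function.Injective MotzkinTree.unary := by
  intro a b h; injection h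

lemma binary_inj : Function.Injective (fun p : MotzkinTree × MotzkinTree => MotzkinTree.binary p.1 p.2) := by
  rintro ⟨a, b⟩ ⟨c, d⟩ h
  simp only [MotzkinTree.binary.injEq] at h
  simp [h.1, h.2]

lemma filter_decomp (q n : ℕ) :
    (tset (n+1)).filter (fun t => t.unaries = q) =
      (if q = 0 ∧ n = 0 then {MotzkinTree.leaf} else ∅)
      ∪ (if 1 ≤ q then ((tset n).filter fun t => t.unaries = q - 1).image MotzkinTree.unary else ∅)
      ∪ (Finset.range n).biUnion (fun a => (Finset.range (q+1)).biUnion (fun ℓ =>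
          (((tset (a+1)).filter fun t => t.unaries = ℓ) ×ˢ
           ((tset (n-(a+1))).filter fun t => t.unaries = q - ℓ)).image
            fun p => MotzkinTree.binary p.1 p.2)) := by
  ext t
  simp only [Finset.mem_filter, mem_tset, Finset.mem_union, Finset.mem_biUnion,
    Finset.mem_range]
  cases t with
  | leaf =>
    simp only [size, unaries]
    constructor
    · rintro ⟨h1, h2⟩
      left; left
      have hn : n = 0 := by omega
      have hq : q = 0 := h2.symm
      simp [hn, hq]
    · rintro ((h | h) | ⟨a, ha, ℓ, hℓ, h⟩)
      · split_ifs at h with hc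
        · simp only [Finset.mem_singleton] at h
          exact ⟨by omega, hc.1.symm⟩
        · simp at h
      · split_ifs at h with hc
        · simp only [Finset.mem_image] at h
          obtain ⟨x, hx, hx2⟩ := h; cases hx2
        · simp at h
      · simp only [Finset.mem_image] at h
        obtain ⟨p, hp, h⟩ := h; cases h
  | unary t' =>
    simp only [size, unaries]
    constructor
    · rintro ⟨h1, h2⟩
      left; right
      have hq : 1 ≤ q := by omega
      simp only [hq, if_true, Finset.mem_image, Finset.mem_filter, mem_tset]
      exact ⟨t', ⟨by omega, by omega⟩, rfl⟩
    · rintro ((h | h) | ⟨a, ha, ℓ, hℓ, h⟩)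
      · split_ifs at h with hc
        · simp only [Finset.mem_singleton] at h; cases h
        · simp at h
      · split_ifs at h with hc
        · simp only [Finset.mem_image, Finset.mem_filter, mem_tset] at h
          obtain ⟨x, ⟨hx1, hx2⟩, hx3⟩ := h
          injection hx3 with he; subst he
          exact ⟨by omega, by omega⟩
        · simp at h
      · simp only [Finset.mem_image] at h
        obtain ⟨p, hp, h⟩ := h; cases h
  | binary l r =>
    simp only [size, unaries]
    constructor
    · rintro ⟨h1, h2⟩
      right
      have hl := one_le_size l
      have hr := one_le_size r
      refine ⟨l.size - 1, by omega, l.unaries, by omega, ?_⟩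
      simp only [Finset.mem_image, Finset.mem_product, Finset.mem_filter, mem_tset]
      refine ⟨(l, r), ?_, rfl⟩
      dsimp only
      exact ⟨⟨by omega, rfl⟩, by omega, by omega⟩
    · rintro ((h | h) | ⟨a, ha, ℓ, hℓ, h⟩)
      · split_ifs at h with hc
        · simp only [Finset.mem_singleton] at h; cases h
        · simp at h
      · split_ifs at h with hc
        · simp only [Finset.mem_image] at h
          obtain ⟨x, hx, hx2⟩ := h; cases hx2
        · simp at h
      · simp only [Finset.mem_image, Finset.mem_product, Finset.mem_filter, mem_tset] at h
        obtain ⟨⟨x, y⟩, ⟨⟨hx1, hx2⟩, hy1, hy2⟩, h⟩ := h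
        injection h with he1 he2
        subst he1; subst he2
        exact ⟨by omega, by omega⟩

end MotzkinTree

namespace MotzkinTree

lemma cnt_succ (q n : ℕ) :
    cnt q (n+1) = (if q = 0 ∧ n = 0 then 1 else 0)
      + (if 1 ≤ q then cnt (q-1) n else 0)
      + ∑ a ∈ Finset.range n, ∑ ℓ ∈ Finset.range (q+1),
          cnt ℓ (a+1) * cnt (q-ℓ) (n-(a+1)) := by
  have memA : ∀ t ∈ (if q = 0 ∧ n = 0 then ({MotzkinTree.leaf} : Finset MotzkinTree) else ∅),
      t = MotzkinTree.leaf := by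
    split_ifs <;> simp
  have memB : ∀ t ∈ (if 1 ≤ q then ((tset n).filter fun t => t.unaries = q - 1).image
      MotzkinTree.unary else ∅), ∃ x, t = MotzkinTree.unary x := by
    split_ifs
    · intro t ht
      obtain ⟨x, _, rfl⟩ := Finset.mem_image.1 ht
      exact ⟨x, rfl⟩
    · simp
  have memC : ∀ a ℓ : ℕ, ∀ t ∈ (((tset (a+1)).filter fun t => t.unaries = ℓ) ×ˢ
           ((tset (n-(a+1))).filter fun t => t.unaries = q - ℓ)).image
            (fun p => MotzkinTree.binary p.1 p.2),
      ∃ x y, t = MotzkinTree.binary x y ∧ x.size = a + 1 ∧ x.unaries = ℓ := by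
    intro a ℓ t ht
    obtain ⟨⟨x, y⟩, hp, rfl⟩ := Finset.mem_image.1 ht
    obtain ⟨hx, -⟩ := Finset.mem_product.1 hp
    obtain ⟨hx1, hx2⟩ := Finset.mem_filter.1 hx
    exact ⟨x, y, rfl, mem_tset.1 hx1, hx2⟩
  rw [cnt, filter_decomp]
  rw [Finset.card_union_of_disjoint, Finset.card_union_of_disjoint]
  · congr 1
    · congr 1
      · split_ifs <;> simp
      · split_ifs with h
        · rw [Finset.card_image_of_injective _ unary_inj]; rfl
        · simp
    · rw [Finset.card_biUnion]
      · refine Finset.sum_congr rfl fun a _ => ?_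
        rw [Finset.card_biUnion]
        · refine Finset.sum_congr rfl fun ℓ _ => ?_
          rw [Finset.card_image_of_injective _ binary_inj, Finset.card_product]
          rfl
        · intro ℓ _ ℓ' _ hne
          simp only [Finset.disjoint_left]
          intro t ht ht'
          obtain ⟨x, y, rfl, -, hx2⟩ := memC a ℓ t ht
          obtain ⟨x', y', he, -, hx2'⟩ := memC a ℓ' _ ht'
          injection he with e1 e2
          subst e1
          exact hne (by omega)
      · intro a _ a' _ hne
        simp only [Finset.disjoint_left]
        intro t ht ht'
        simp only [Finset.mem_biUnion] at ht ht'
        obtain ⟨ℓ, -, ht⟩ := ht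
        obtain ⟨ℓ', -, ht'⟩ := ht'
        obtain ⟨x, y, rfl, hx1, -⟩ := memC a ℓ t ht
        obtain ⟨x', y', he, hx1', -⟩ := memC a' ℓ' _ ht'
        injection he with e1 e2
        subst e1
        exact hne (by omega)
  · simp only [Finset.disjoint_left]
    intro t ht ht'
    obtain rfl := memA t ht
    obtain ⟨x, he⟩ := memB _ ht'
    cases he
  · simp only [Finset.disjoint_left, Finset.mem_union]
    rintro t (ht | ht) ht'
    · obtain rfl := memA t ht
      simp only [Finset.mem_biUnion] at ht'
      obtain ⟨a, -, ℓ, -, ht'⟩ := ht'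
      obtain ⟨x, y, he, -, -⟩ := memC a ℓ _ ht'
      cases he
    · obtain ⟨x, rfl⟩ := memB t ht
      simp only [Finset.mem_biUnion] at ht'
      obtain ⟨a, -, ℓ, -, ht'⟩ := ht'
      obtain ⟨x', y', he, -, -⟩ := memC a ℓ _ ht'
      cases he

end MotzkinTree

namespace MotzkinTree

lemma card_eq_cnt (q n : ℕ) :
    Nat.card {t : MotzkinTree // t.size = n ∧ t.unaries = q} = cnt q n := by
  have e : {t : MotzkinTree // t.size = n ∧ t.unaries = q} ≃
      {t : MotzkinTree // t ∈ (tset n).filter fun t => t.unaries = q} :=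
    Equiv.subtypeEquivRight (fun t => by simp [Finset.mem_filter, mem_tset])
  rw [Nat.card_congr e, Nat.card_eq_fintype_card, Fintype.card_coe, cnt]

lemma coeff_motzkinGF (q n : ℕ) :
    (PowerSeries.coeff n) (motzkinGF q) = (cnt q n : ℚ) := by
  rw [motzkinGF, coeff_mk, card_eq_cnt]

lemma motzkin_master (q : ℕ) :
    motzkinGF q = (if q = 0 then X else 0)
      + (if 1 ≤ q then X * motzkinGF (q-1) else 0)
      + X * ∑ ℓ ∈ Finset.range (q+1), motzkinGF ℓ * motzkinGF (q-ℓ) := by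
  ext n
  cases n with
  | zero =>
    simp only [map_add, coeff_motzkinGF, cnt_zero, apply_ite (PowerSeries.coeff (R := ℚ) 0),
      coeff_zero_X_mul, map_zero, PowerSeries.coeff_X]
    split_ifs <;> simp_all
  | succ n =>
    rw [map_add, map_add]
    have e1 : (PowerSeries.coeff (n+1)) (if q = 0 then (X : PowerSeries ℚ) else 0)
        = if q = 0 ∧ n = 0 then 1 else 0 := by
      by_cases h1 : q = 0 <;> by_cases h2 : n = 0 <;>
        simp [h1, h2, PowerSeries.coeff_X]
    have e2 : (PowerSeries.coeff (n+1)) (if 1 ≤ q then X * motzkinGF (q-1) else 0)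
        = if 1 ≤ q then (cnt (q-1) n : ℚ) else 0 := by
      split_ifs <;> simp [coeff_succ_X_mul, coeff_motzkinGF]
    have e3 : (PowerSeries.coeff (n+1))
          (X * ∑ ℓ ∈ Finset.range (q+1), motzkinGF ℓ * motzkinGF (q-ℓ))
        = ∑ ℓ ∈ Finset.range (q+1), ∑ a ∈ Finset.range (n+1),
            (cnt ℓ a : ℚ) * (cnt (q-ℓ) (n-a) : ℚ) := by
      rw [coeff_succ_X_mul, map_sum]
      refine Finset.sum_congr rfl fun ℓ _ => ?_
      rw [coeff_mul, Finset.Nat.sum_antidiagonal_eq_sum_range_succ_mk]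
      simp only [coeff_motzkinGF]
    have e4 : (∑ ℓ ∈ Finset.range (q+1), ∑ a ∈ Finset.range (n+1),
          (cnt ℓ a : ℚ) * (cnt (q-ℓ) (n-a) : ℚ))
        = ∑ a ∈ Finset.range n, ∑ ℓ ∈ Finset.range (q+1),
            (cnt ℓ (a+1) : ℚ) * (cnt (q-ℓ) (n-(a+1)) : ℚ) := by
      rw [Finset.sum_comm, Finset.sum_range_succ']
      simp [cnt_zero]
    rw [e1, e2, e3, coeff_motzkinGF, cnt_succ q n, e4]
    push_cast
    ring

end MotzkinTree


open MotzkinTree in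
theorem motzkinGF_eqs :
    (∃ S : PowerSeries ℚ, S ^ 2 = 1 - 4 * X ^ 2 ∧ constantCoeff S = 1 ∧
      2 * X * motzkinGF 0 = 1 - S) ∧
    (∀ q : ℕ, 1 ≤ q →
      (1 - 2 * X * motzkinGF 0) * motzkinGF q =
        X * motzkinGF (q - 1) +
          X * ∑ ℓ ∈ Finset.Ico 1 q, motzkinGF ℓ * motzkinGF (q - ℓ)) := by
  have h0 : motzkinGF 0 = X + X * (motzkinGF 0 * motzkinGF 0) := by
    have h := motzkin_master 0
    simpa using h
  constructor
  · refine ⟨1 - 2 * X * motzkinGF 0, ?_, ?_, by ring⟩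
    · linear_combination (-4 * (X : PowerSeries ℚ)) * h0
    · simp [map_sub, map_mul, constantCoeff_X]
  · intro q hq
    have hm := motzkin_master q
    rw [if_neg (by omega), if_pos hq] at hm
    have hsum : ∑ ℓ ∈ Finset.range (q+1), motzkinGF ℓ * motzkinGF (q-ℓ)
        = motzkinGF 0 * motzkinGF q
          + (∑ ℓ ∈ Finset.Ico 1 q, motzkinGF ℓ * motzkinGF (q-ℓ))
          + motzkinGF q * motzkinGF 0 := by
      rw [Finset.range_eq_Ico, Finset.sum_Ico_succ_top (by omega : 0 ≤ q),
        Finset.sum_eq_sum_Ico_succ_bot (by omega : 0 < q)]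
      simp [Nat.sub_self, Nat.sub_zero]
    rw [hsum] at hm
    linear_combination hm
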